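/- If p ≤ 2k+1, then the full tournament T_p (all arcs (i,j) with clockwise distance from i to j at most p/2, routed via shortest paths on C⃗_p) induces load at most k(k+1)/2 on every arc of the cycle C⃗_p; consequently γ(k(k+1)/2, p) = p(p−1)/2 for p ≤ 2k+1. -/

import Mathlib

/-- The load induced on the arc of the directed cycle `C⃗_p` going from `t` to `t+1`
by a set `S` of requests, each request `(i,j)` being routed clockwise from `i` to `j`. -/
def cload (p : ℕ) (S : Finset (ZMod p × ZMod p)) (t : ZMod p) : ℕ :=
  (S.filter fun a => (t - a.1).val < (a.2 - a.1).val).card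

/-- `gamma C p` is the maximum number of arcs of a (loopless, oriented) digraph on `Z_p`,
arcs routed clockwise on the cycle `C⃗_p`, whose load on every cycle-arc is at most `C`. -/
noncomputable def gamma (C p : ℕ) : ℕ :=
  sSup {n : ℕ | ∃ S : Finset (ZMod p × ZMod p),
    (∀ a ∈ S, a.1 ≠ a.2) ∧ (∀ a ∈ S, (a.2, a.1) ∉ S) ∧
    (∀ t : ZMod p, cload p S t ≤ C) ∧ S.card = n}

lemma offDiag_card_zmod (p : ℕ) [NeZero p] :
    (Finset.univ : Finset (ZMod p)).offDiag.card = p * (p - 1) := by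
  rw [Finset.offDiag_card, Finset.card_univ, ZMod.card]
  have := Nat.mul_pred p p
  simpa using this.symm

lemma union_swap_subset (p : ℕ) [NeZero p] (S : Finset (ZMod p × ZMod p))
    (h1 : ∀ a ∈ S, a.1 ≠ a.2) :
    S ∪ S.image Prod.swap ⊆ (Finset.univ : Finset (ZMod p)).offDiag := by
  intro a ha
  rw [Finset.mem_union] at ha
  rcases ha with ha | ha
  · simp [Finset.mem_offDiag, h1 a ha]
  · obtain ⟨b, hb, rfl⟩ := Finset.mem_image.mp ha
    simp [Finset.mem_offDiag, (h1 b hb).symm]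

lemma disjoint_swap (p : ℕ) (S : Finset (ZMod p × ZMod p))
    (h2 : ∀ a ∈ S, (a.2, a.1) ∉ S) :
    Disjoint S (S.image Prod.swap) := by
  rw [Finset.disjoint_left]
  intro a ha ha'
  obtain ⟨b, hb, hba⟩ := Finset.mem_image.mp ha'
  rw [← hba] at ha
  exact h2 b hb ha

lemma two_mul_card_le (p : ℕ) [NeZero p] (S : Finset (ZMod p × ZMod p))
    (h1 : ∀ a ∈ S, a.1 ≠ a.2) (h2 : ∀ a ∈ S, (a.2, a.1) ∉ S) :
    2 * S.card ≤ p * (p - 1) := by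
  have hc := Finset.card_le_card (union_swap_subset p S h1)
  rw [Finset.card_union_of_disjoint (disjoint_swap p S h2),
    Finset.card_image_of_injective _ Prod.swap_injective, offDiag_card_zmod p] at hc
  omega

lemma two_mul_card_eq (p : ℕ) [NeZero p] (T : Finset (ZMod p × ZMod p))
    (h1 : ∀ a ∈ T, a.1 ≠ a.2)
    (hT2 : ∀ i j : ZMod p, i ≠ j → ((i, j) ∈ T ↔ (j, i) ∉ T)) :
    2 * T.card = p * (p - 1) := by
  have h2 : ∀ a ∈ T, (a.2, a.1) ∉ T := fun a ha => (hT2 a.1 a.2 (h1 a ha)).mp ha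
  have hsub : (Finset.univ : Finset (ZMod p)).offDiag ⊆ T ∪ T.image Prod.swap := by
    rintro ⟨i, j⟩ hij
    rw [Finset.mem_offDiag] at hij
    rw [Finset.mem_union]
    by_cases h : (i, j) ∈ T
    · exact Or.inl h
    · right
      rw [Finset.mem_image]
      refine ⟨(j, i), ?_, rfl⟩
      by_contra hji
      exact h ((hT2 i j hij.2.2).mpr hji)
  have heq : T ∪ T.image Prod.swap = (Finset.univ : Finset (ZMod p)).offDiag :=
    le_antisymm (union_swap_subset p T h1) hsub
  have hc := congrArg Finset.card heq
  rw [Finset.card_union_of_disjoint (disjoint_swap p T h2),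
    Finset.card_image_of_injective _ Prod.swap_injective, offDiag_card_zmod p] at hc
  omega

lemma triangle_count (n : ℕ) :
    ((Finset.range n ×ˢ Finset.range n).filter fun q => q.1 < q.2).card = n * (n - 1) / 2 := by
  have heq : ((Finset.range n ×ˢ Finset.range n).filter fun q => q.1 < q.2)
      = (Finset.range n).biUnion (fun d => (Finset.range d).image (fun s => (s, d))) := by
    ext ⟨s, d⟩
    simp only [Finset.mem_filter, Finset.mem_product, Finset.mem_range, Finset.mem_biUnion,
      Finset.mem_image]
    constructor
    · rintro ⟨⟨hs, hd⟩, hlt⟩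
      exact ⟨d, hd, s, hlt, rfl⟩
    · rintro ⟨d', hd', s', hs', heq⟩
      injection heq with e1 e2
      subst e1; subst e2
      exact ⟨⟨hs'.trans hd', hd'⟩, hs'⟩
  rw [heq, Finset.card_biUnion]
  · have hi : ∀ d : ℕ, ((Finset.range d).image (fun s => (s, d))).card = d := by
      intro d
      rw [Finset.card_image_of_injective, Finset.card_range]
      intro x y h
      injection h
    calc (∑ d ∈ Finset.range n, ((Finset.range d).image (fun s => (s, d))).card)
        = ∑ d ∈ Finset.range n, d := Finset.sum_congr rfl (fun d _ => hi d)
      _ = n * (n - 1) / 2 := Finset.sum_range_id n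
  · intro x _ y _ hxy
    rw [Function.onFun, Finset.disjoint_left]
    rintro ⟨s, d⟩ hs ht
    obtain ⟨s1, _, h1⟩ := Finset.mem_image.mp hs
    obtain ⟨s2, _, h2⟩ := Finset.mem_image.mp ht
    injection h1 with _ e1
    injection h2 with _ e2
    exact hxy (e1.trans e2.symm)

lemma load_bound (p : ℕ) [NeZero p] (T : Finset (ZMod p × ZMod p))
    (hT1 : ∀ a ∈ T, a.1 ≠ a.2 ∧ 2 * (a.2 - a.1).val ≤ p) (t : ZMod p) :
    cload p T t ≤ (p / 2 + 1) * (p / 2) / 2 := by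
  have key : cload p T t ≤
      ((Finset.range (p / 2 + 1) ×ˢ Finset.range (p / 2 + 1)).filter fun q => q.1 < q.2).card := by
    apply Finset.card_le_card_of_injOn (fun a => ((t - a.1).val, (a.2 - a.1).val))
    · intro a ha
      rw [Finset.mem_coe, Finset.mem_filter] at ha
      obtain ⟨haT, hlt⟩ := ha
      have hd := (hT1 a haT).2
      simp only [Finset.mem_coe, Finset.mem_filter, Finset.mem_product, Finset.mem_range]
      exact ⟨⟨by omega, by omega⟩, hlt⟩
    · intro a _ b _ hab
      simp only [Prod.mk.injEq] at hab
      have e1 : t - a.1 = t - b.1 := ZMod.val_injective p hab.1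
      have e2 : a.2 - a.1 = b.2 - b.1 := ZMod.val_injective p hab.2
      have f1 : a.1 = b.1 := by
        have := sub_right_injective e1
        exact this
      have f2 : a.2 = b.2 := by
        rw [f1] at e2
        have h := sub_left_injective e2
        exact h
      exact Prod.ext f1 f2
  calc cload p T t ≤ _ := key
    _ = (p / 2 + 1) * (p / 2 + 1 - 1) / 2 := triangle_count (p / 2 + 1)
    _ = (p / 2 + 1) * (p / 2) / 2 := by norm_num

theorem stmt_8 (p k : ℕ) (hk : 1 ≤ k) (hp2 : 2 ≤ p) (hp : p ≤ 2 * k + 1)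
    (T : Finset (ZMod p × ZMod p))
    (hT1 : ∀ a ∈ T, a.1 ≠ a.2 ∧ 2 * (a.2 - a.1).val ≤ p)
    (hT2 : ∀ i j : ZMod p, i ≠ j → ((i, j) ∈ T ↔ (j, i) ∉ T)) :
    (∀ t : ZMod p, cload p T t ≤ k * (k + 1) / 2) ∧
      gamma (k * (k + 1) / 2) p = p * (p - 1) / 2 := by
  haveI : NeZero p := ⟨by omega⟩
  have hm : p / 2 ≤ k := by omega
  have hload : ∀ t : ZMod p, cload p T t ≤ k * (k + 1) / 2 := by
    intro t
    have h1 := load_bound p T hT1 t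
    have h2 : (p / 2 + 1) * (p / 2) ≤ k * (k + 1) :=
      calc (p / 2 + 1) * (p / 2) ≤ (k + 1) * k := Nat.mul_le_mul (by omega) hm
        _ = k * (k + 1) := Nat.mul_comm _ _
    exact h1.trans (Nat.div_le_div_right h2)
  refine ⟨hload, ?_⟩
  have hT1' : ∀ a ∈ T, a.1 ≠ a.2 := fun a ha => (hT1 a ha).1
  have hanti : ∀ a ∈ T, (a.2, a.1) ∉ T := fun a ha => (hT2 a.1 a.2 (hT1' a ha)).mp ha
  have hcard : 2 * T.card = p * (p - 1) := two_mul_card_eq p T hT1' hT2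
  have hmem : p * (p - 1) / 2 ∈ {n : ℕ | ∃ S : Finset (ZMod p × ZMod p),
      (∀ a ∈ S, a.1 ≠ a.2) ∧ (∀ a ∈ S, (a.2, a.1) ∉ S) ∧
      (∀ t : ZMod p, cload p S t ≤ k * (k + 1) / 2) ∧ S.card = n} :=
    ⟨T, hT1', hanti, hload, by omega⟩
  have hub : ∀ n ∈ {n : ℕ | ∃ S : Finset (ZMod p × ZMod p),
      (∀ a ∈ S, a.1 ≠ a.2) ∧ (∀ a ∈ S, (a.2, a.1) ∉ S) ∧
      (∀ t : ZMod p, cload p S t ≤ k * (k + 1) / 2) ∧ S.card = n}, n ≤ p * (p - 1) / 2 := by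
    rintro n ⟨S, hS1, hS2, _, rfl⟩
    have := two_mul_card_le p S hS1 hS2
    omega
  rw [gamma]
  exact le_antisymm (csSup_le ⟨_, hmem⟩ hub) (le_csSup ⟨p * (p - 1) / 2, hub⟩ hmem)
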